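/- Let (R_n) be a monic orthogonal polynomial sequence satisfying R_{n+1}(x) = (x - β*_n)R_n(x) - γ*_n R_{n-1}(x) with γ*_n ≠ 0 for n ≥ 1, and define a sequence of monic polynomials (Q_n) recursively by R_n = Q_n + Σ_{i=1}^M s_{i,n} Q_{n-i}, with s_{i,n} = 0 for i > n and s_{M,n} ≠ 0 for n ≥ M. Set β̃_n := β*_n + s_{1,n+1} - s_{1,n} and γ̃_n := γ*_n + s_{1,n}(β*_n - β̃_{n-1}) + s_{2,n+1} - s_{2,n}. Then (Q_n) satisfies Q_{n+1}(x) = (x - β̃_n)Q_n(x) - γ̃_n Q_{n-1}(x) with γ̃_n ≠ 0 for all n ≥ 1 if and only if B_{i,n} = 0 for n ≥ i, 2 ≤ i ≤ M-1, B_{M,n} = 0 for n ≥ M (when M ≥ 2), and B_{M+1,n} = 0 for n ≥ M+1, where B_{i,n} := s_{i+1,n} - s_{i+1,n+1} + s_{i,n}(β̃_{n-i} - β*_n) + s_{i-1,n}γ̃_{n+1-i} - s_{i-1,n-1}γ*_n, B_{M,n} := s_{M,n}(β̃_{n-M} - β*_n) + s_{M-1,n}γ̃_{n+1-M} - s_{M-1,n-1}γ*_n,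 and B_{M+1,n} := s_{M,n}γ̃_{n-M} - s_{M,n-1}γ*_n. -/

import Mathlib

open Polynomial Finset

private noncomputable def auxG (γt : ℕ → ℂ) : ℕ → ℂ := fun m => if m = 0 then 0 else γt m

private noncomputable def auxE (βt γt : ℕ → ℂ) (Q : ℕ → Polynomial ℂ) (m : ℕ) : Polynomial ℂ :=
  Q (m+1) - (X - C (βt m)) * Q m + C (auxG γt m) * Q (m-1)

private noncomputable def auxB (s : ℕ → ℕ → ℂ) (βs βt γs γt : ℕ → ℂ) (j n : ℕ) : ℂ :=
  s (j+1) n - s (j+1) (n+1) + s j n * (βt (n-j) - βs n)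
    + s (j-1) n * auxG γt (n+1-j) - s (j-1) (n-1) * γs n

private lemma auxLI (Q : ℕ → Polynomial ℂ) (hQmonic : ∀ n, (Q n).Monic)
    (hQdeg : ∀ n, (Q n).degree = n) (F : Finset ℕ) :
    ∀ c : ℕ → ℂ, ∑ k ∈ F, c k • Q k = 0 → ∀ k ∈ F, c k = 0 := by
  induction F using Finset.induction_on_max with
  | empty => intro c _ k hk; exact absurd hk (Finset.notMem_empty k)
  | insert a t ha ih =>
    intro c hsum k hk
    have hna : a ∉ t := fun h => lt_irrefl a (ha a h)
    rw [Finset.sum_insert hna] at hsum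
    have hca : c a = 0 := by
      have h1 := congrArg (fun p => p.coeff a) hsum
      simp only [coeff_add, coeff_smul, finset_sum_coeff, coeff_zero, smul_eq_mul] at h1
      have h2 : ∀ b ∈ t, c b * (Q b).coeff a = 0 := by
        intro b hb
        rw [coeff_eq_zero_of_degree_lt, mul_zero]
        rw [hQdeg b]; exact_mod_cast ha b hb
      rw [Finset.sum_eq_zero h2, add_zero] at h1
      have h3 : (Q a).coeff a = 1 := by
        have h4 := (hQmonic a).coeff_natDegree
        rwa [natDegree_eq_of_degree_eq_some (hQdeg a)] at h4
      rw [h3, mul_one] at h1; exact h1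
    rcases Finset.mem_insert.mp hk with rfl | hk'
    · exact hca
    · exact ih c (by rwa [hca, zero_smul, zero_add] at hsum) k hk'

private lemma shift0 {A : Type*} [AddCommMonoid A] (K : ℕ) (F : ℕ → A)
    (h1 : F (K+1) = 0) (h2 : F (K+2) = 0) :
    ∑ i ∈ range (K+1), F i = ∑ j ∈ range (K+3), F j := by
  conv_rhs => rw [Finset.sum_range_succ, Finset.sum_range_succ]
  rw [h1, h2, add_zero, add_zero]

private lemma shift1 {A : Type*} [AddCommMonoid A] (K : ℕ) (F : ℕ → A) (h1 : F (K+1) = 0) :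
    ∑ i ∈ range (K+1), F i = ∑ j ∈ range (K+3), (if 1 ≤ j then F (j-1) else 0) := by
  have h : ∀ j ∈ range (K+2), (if 1 ≤ j+1 then F (j+1-1) else 0) = F j := by
    intro j _; have e : j+1-1 = j := by omega
    rw [if_pos (by omega), e]
  conv_rhs => rw [Finset.sum_range_succ' _ (K+2)]
  rw [Finset.sum_congr rfl h, if_neg (by omega : ¬(1:ℕ) ≤ 0), add_zero]
  conv_rhs => rw [Finset.sum_range_succ]
  rw [h1, add_zero]

private lemma shift1' {A : Type*} [AddCommMonoid A] (K : ℕ) (F : ℕ → A) :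
    ∑ i ∈ range (K+2), F i = ∑ j ∈ range (K+3), (if 1 ≤ j then F (j-1) else 0) := by
  have h : ∀ j ∈ range (K+2), (if 1 ≤ j+1 then F (j+1-1) else 0) = F j := by
    intro j _; have e : j+1-1 = j := by omega
    rw [if_pos (by omega), e]
  conv_rhs => rw [Finset.sum_range_succ' _ (K+2)]
  rw [Finset.sum_congr rfl h, if_neg (by omega : ¬(1:ℕ) ≤ 0), add_zero]

private lemma shift2 {A : Type*} [AddCommMonoid A] (K : ℕ) (F : ℕ → A) :
    ∑ i ∈ range (K+1), F i = ∑ j ∈ range (K+3), (if 2 ≤ j then F (j-2) else 0) := by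
  have h : ∀ j ∈ range (K+1), (if 2 ≤ j+1+1 then F (j+1+1-2) else 0) = F j := by
    intro j _; have e : j+1+1-2 = j := by omega
    rw [if_pos (by omega), e]
  conv_rhs => rw [Finset.sum_range_succ' _ (K+2), Finset.sum_range_succ' _ (K+1)]
  rw [Finset.sum_congr rfl h, if_neg (by omega : ¬(2:ℕ) ≤ 0+1), if_neg (by omega : ¬(2:ℕ) ≤ 0),
    add_zero, add_zero]

private lemma auxKEY (M : ℕ) (βs γs βt γt : ℕ → ℂ) (s : ℕ → ℕ → ℂ)
    (R Q : ℕ → Polynomial ℂ)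
    (hRrec : ∀ n, 1 ≤ n → R (n + 1) = (X - C (βs n)) * R n - C (γs n) * R (n - 1))
    (hs0 : ∀ n, s 0 n = 1)
    (hsz : ∀ i n, n < i → s i n = 0)
    (hsM : ∀ i n, M < i → s i n = 0)
    (hβt : ∀ n, βt n = βs n + s 1 (n + 1) - s 1 n)
    (hγt : ∀ n, 1 ≤ n → γt n = γs n + s 1 n * (βs n - βt (n - 1)) + s 2 (n + 1) - s 2 n)
    (hrel' : ∀ m, R m = ∑ i ∈ range (M+1), s i m • Q (m - i))
    (n : ℕ) (hn : 1 ≤ n) :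
    ∑ i ∈ range (M+1), s i n • auxE βt γt Q (n-i)
      = ∑ j ∈ Finset.Icc 2 (M+1), auxB s βs βt γs γt j n • Q (n-j) := by
  -- decomposition of the E-sum
  have hE : ∑ i ∈ range (M+1), s i n • auxE βt γt Q (n-i)
      = (∑ i ∈ range (M+1), s i n • Q (n-i+1))
        - (∑ i ∈ range (M+1), s i n • (X * Q (n-i)))
        + (∑ i ∈ range (M+1), (βt (n-i) * s i n) • Q (n-i))
        + (∑ i ∈ range (M+1), (auxG γt (n-i) * s i n) • Q (n-i-1)) := by
    rw [← Finset.sum_sub_distrib, ← Finset.sum_add_distrib, ← Finset.sum_add_distrib]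
    refine Finset.sum_congr rfl fun i _ => ?_
    simp only [auxE, smul_eq_C_mul, map_mul]
    ring
  -- decomposition of the R-side
  have hRS : R (n+1) - ((X - C (βs n)) * R n - C (γs n) * R (n-1))
      = (∑ i ∈ range (M+1), s i (n+1) • Q (n+1-i))
        - (∑ i ∈ range (M+1), s i n • (X * Q (n-i)))
        + (∑ i ∈ range (M+1), (βs n * s i n) • Q (n-i))
        + (∑ i ∈ range (M+1), (γs n * s i (n-1)) • Q (n-1-i)) := by
    have e1 : (X - C (βs n)) * ∑ i ∈ range (M+1), s i n • Q (n-i)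
        = (∑ i ∈ range (M+1), s i n • (X * Q (n-i)))
          - (∑ i ∈ range (M+1), (βs n * s i n) • Q (n-i)) := by
      rw [Finset.mul_sum, ← Finset.sum_sub_distrib]
      refine Finset.sum_congr rfl fun i _ => ?_
      simp only [smul_eq_C_mul, map_mul]; ring
    have e2 : C (γs n) * ∑ i ∈ range (M+1), s i (n-1) • Q (n-1-i)
        = ∑ i ∈ range (M+1), (γs n * s i (n-1)) • Q (n-1-i) := by
      rw [Finset.mul_sum]
      refine Finset.sum_congr rfl fun i _ => ?_
      simp only [smul_eq_C_mul, map_mul]; ring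
    rw [hrel' (n+1), hrel' n, hrel' (n-1), e1, e2]; abel
  -- normalizations to range (M+3)
  have hA1 : ∑ i ∈ range (M+1), s i n • Q (n-i+1)
      = ∑ j ∈ range (M+3), s j n • Q (n-j+1) :=
    shift0 M (fun i => s i n • Q (n-i+1))
      (by show s (M+1) n • Q (n-(M+1)+1) = 0; rw [hsM _ _ (by omega), zero_smul])
      (by show s (M+2) n • Q (n-(M+2)+1) = 0; rw [hsM _ _ (by omega), zero_smul])
  have hB1 : ∑ i ∈ range (M+1), s i (n+1) • Q (n+1-i)
      = ∑ j ∈ range (M+3), s j (n+1) • Q (n+1-j) :=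
    shift0 M (fun i => s i (n+1) • Q (n+1-i))
      (by show s (M+1) (n+1) • Q (n+1-(M+1)) = 0; rw [hsM _ _ (by omega), zero_smul])
      (by show s (M+2) (n+1) • Q (n+1-(M+2)) = 0; rw [hsM _ _ (by omega), zero_smul])
  have hA3 : ∑ i ∈ range (M+1), (βt (n-i) * s i n) • Q (n-i)
      = ∑ j ∈ range (M+3), (if 1 ≤ j then (βt (n-(j-1)) * s (j-1) n) • Q (n-(j-1)) else 0) :=
    shift1 M (fun i => (βt (n-i) * s i n) • Q (n-i))
      (by show (βt (n-(M+1)) * s (M+1) n) • Q (n-(M+1)) = 0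
          rw [hsM _ _ (by omega), mul_zero, zero_smul])
  have hB2 : ∑ i ∈ range (M+1), (βs n * s i n) • Q (n-i)
      = ∑ j ∈ range (M+3), (if 1 ≤ j then (βs n * s (j-1) n) • Q (n-(j-1)) else 0) :=
    shift1 M (fun i => (βs n * s i n) • Q (n-i))
      (by show (βs n * s (M+1) n) • Q (n-(M+1)) = 0
          rw [hsM _ _ (by omega), mul_zero, zero_smul])
  have hA4 : ∑ i ∈ range (M+1), (auxG γt (n-i) * s i n) • Q (n-i-1)
      = ∑ j ∈ range (M+3), (if 2 ≤ j then (auxG γt (n-(j-2)) * s (j-2) n) • Q (n-(j-2)-1) else 0) :=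
    shift2 M (fun i => (auxG γt (n-i) * s i n) • Q (n-i-1))
  have hB3 : ∑ i ∈ range (M+1), (γs n * s i (n-1)) • Q (n-1-i)
      = ∑ j ∈ range (M+3), (if 2 ≤ j then (γs n * s (j-2) (n-1)) • Q (n-1-(j-2)) else 0) :=
    shift2 M (fun i => (γs n * s i (n-1)) • Q (n-1-i))
  have hSBB : ∑ j ∈ Finset.Icc 2 (M+1), auxB s βs βt γs γt j n • Q (n-j)
      = ∑ j ∈ range (M+3),
          (if 1 ≤ j then (if 2 ≤ j-1 then auxB s βs βt γs γt (j-1) n • Q (n-(j-1)) else 0) else 0) := by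
    have step1 : ∑ j ∈ Finset.Icc 2 (M+1), auxB s βs βt γs γt j n • Q (n-j)
        = ∑ i ∈ range (M+2), (if 2 ≤ i then auxB s βs βt γs γt i n • Q (n-i) else 0) := by
      rw [Finset.sum_congr rfl (fun j hj => (if_pos (Finset.mem_Icc.mp hj).1).symm)]
      exact Finset.sum_subset (fun x hx => by simp only [Finset.mem_Icc] at hx
                                              simp only [Finset.mem_range]; omega)
        (fun x _ hx => by rw [if_neg (fun h2 => hx (Finset.mem_Icc.mpr
          ⟨h2, by simp only [Finset.mem_range] at *; omega⟩))])
      -- careful: need x ≤ M+1 from x ∈ range (M+2)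
    rw [step1]
    exact shift1' M (fun i => if 2 ≤ i then auxB s βs βt γs γt i n • Q (n-i) else 0)
  -- the central pointwise identity
  have hmain : (∑ i ∈ range (M+1), s i n • Q (n-i+1))
        + (∑ i ∈ range (M+1), (βt (n-i) * s i n) • Q (n-i))
        + (∑ i ∈ range (M+1), (auxG γt (n-i) * s i n) • Q (n-i-1))
      - ((∑ i ∈ range (M+1), s i (n+1) • Q (n+1-i))
        + (∑ i ∈ range (M+1), (βs n * s i n) • Q (n-i))
        + (∑ i ∈ range (M+1), (γs n * s i (n-1)) • Q (n-1-i)))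
      - (∑ j ∈ Finset.Icc 2 (M+1), auxB s βs βt γs γt j n • Q (n-j)) = 0 := by
    rw [hA1, hA3, hA4, hB1, hB2, hB3, hSBB]
    rw [← Finset.sum_add_distrib, ← Finset.sum_add_distrib, ← Finset.sum_add_distrib,
      ← Finset.sum_add_distrib, ← Finset.sum_sub_distrib, ← Finset.sum_sub_distrib]
    refine Finset.sum_eq_zero fun j hj => ?_
    match j with
    | 0 => norm_num [hs0]
    | 1 =>
      norm_num
      try rw [show 1+(n-1) = n from by omega]
      try rw [show n-1+1 = n from by omega]
      simp only [hs0, smul_eq_C_mul, map_mul, map_one]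
      have hb : C (βt n) = C (βs n) + C (s 1 (n+1)) - C (s 1 n) := by
        rw [hβt n, map_sub, map_add]
      rw [hb]
      try rw [show 1+(n-1) = n from by omega]
      try rw [show n-1+1 = n from by omega]
      ring
    | 2 =>
      norm_num
      rw [show n+1-2 = n-1 from by omega]
      have hgn : auxG γt n = γt n := by
        rw [auxG]; simp only [if_neg (by omega : ¬ n = 0)]
      rw [hgn]
      have hg : C (γt n) = C (γs n) + C (s 1 n) * (C (βs n) - C (βt (n-1)))
          + C (s 2 (n+1)) - C (s 2 n) := by
        rw [hγt n hn, map_sub, map_add, map_add, map_mul, map_sub]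
      by_cases h2n : 2 ≤ n
      · rw [show n-2+1 = n-1 from by omega]
        simp only [hs0, smul_eq_C_mul, map_mul, map_one]
        rw [hg]; ring
      · have hn1 : n = 1 := by omega
        subst hn1
        rw [hsz 2 1 (by omega)]
        simp only [hs0, smul_eq_C_mul, map_mul, map_one, map_zero]
        rw [hg, hsz 2 1 (by omega), map_zero]
        ring
    | (k+3) =>
      rw [if_pos (by omega : (1:ℕ) ≤ k+3), if_pos (by omega : (2:ℕ) ≤ k+3),
        if_pos (by omega : (1:ℕ) ≤ k+3), if_pos (by omega : (2:ℕ) ≤ k+3),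
        if_pos (by omega : (1:ℕ) ≤ k+3), if_pos (by omega : (2:ℕ) ≤ k+3-1)]
      rw [show k+3-1 = k+2 from by omega, show k+3-2 = k+1 from by omega]
      simp only [auxB]
      rw [show k+2+1 = k+3 from by omega, show k+2-1 = k+1 from by omega]
      rw [show n-(k+1)-1 = n-(k+2) from by omega, show n-1-(k+1) = n-(k+2) from by omega,
        show n+1-(k+3) = n-(k+2) from by omega, show n+1-(k+2) = n-(k+1) from by omega]
      by_cases hjn : k+3 ≤ n
      · rw [show n-(k+3)+1 = n-(k+2) from by omega]
        simp only [smul_eq_C_mul, map_mul, map_sub, map_add]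
        ring
      · rw [hsz (k+3) n (by omega)]
        simp only [smul_eq_C_mul, map_mul, map_sub, map_add, map_zero]
        ring
  have h0 : R (n+1) - ((X - C (βs n)) * R n - C (γs n) * R (n-1)) = 0 := by
    rw [hRrec n hn]; ring
  rw [← sub_eq_zero, hE]
  rw [hRS] at h0
  linear_combination hmain + h0

/-- Proposition 3.2: characterization of the orthogonality (three-term recurrence with
nonvanishing `γ̃_n`) of the sequence `(Q_n)` defined by `R_n = Q_n + Σ_{i=1}^M s_{i,n} Q_{n-i}`. -/
theorem orthogonality_characterization_Qn
    (M : ℕ) (hM : 1 ≤ M)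
    (βs γs βt γt : ℕ → ℂ) (s : ℕ → ℕ → ℂ)
    (R Q : ℕ → Polynomial ℂ)
    (hR0 : R 0 = 1) (hR1 : R 1 = X - C (βs 0))
    (hRrec : ∀ n, 1 ≤ n → R (n + 1) = (X - C (βs n)) * R n - C (γs n) * R (n - 1))
    (hγs : ∀ n, 1 ≤ n → γs n ≠ 0)
    (hs0 : ∀ n, s 0 n = 1)
    (hsz : ∀ i n, n < i → s i n = 0)
    (hsM : ∀ i n, M < i → s i n = 0)
    (hsMne : ∀ n, M ≤ n → s M n ≠ 0)
    (hQmonic : ∀ n, (Q n).Monic) (hQdeg : ∀ n, (Q n).degree = n)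
    (hrel : ∀ n, R n = Q n + ∑ i ∈ Finset.Icc 1 M, s i n • Q (n - i))
    (hβt : ∀ n, βt n = βs n + s 1 (n + 1) - s 1 n)
    (hγt : ∀ n, 1 ≤ n → γt n = γs n + s 1 n * (βs n - βt (n - 1)) + s 2 (n + 1) - s 2 n)
    (B : ℕ → ℕ → ℂ)
    (hB : ∀ i n, B i n = s (i + 1) n - s (i + 1) (n + 1) + s i n * (βt (n - i) - βs n)
        + s (i - 1) n * γt (n + 1 - i) - s (i - 1) (n - 1) * γs n) :
    ((Q 1 = (X - C (βt 0)) * Q 0 ∧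
        (∀ n, 1 ≤ n → Q (n + 1) = (X - C (βt n)) * Q n - C (γt n) * Q (n - 1))) ∧
      (∀ n, 1 ≤ n → γt n ≠ 0))
    ↔ ((∀ i n, 2 ≤ i → i ≤ M - 1 → i ≤ n → B i n = 0) ∧
       (2 ≤ M → ∀ n, M ≤ n → B M n = 0) ∧
       (∀ n, M + 1 ≤ n → B (M + 1) n = 0)) := by
  have hrel' : ∀ m, R m = ∑ i ∈ Finset.range (M+1), s i m • Q (m-i) := by
    intro m
    rw [hrel m]
    rw [show Finset.range (M+1) = insert 0 (Finset.Icc 1 M) from by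
      ext x; simp only [Finset.mem_range, Finset.mem_insert, Finset.mem_Icc]; omega]
    rw [Finset.sum_insert (by simp)]
    simp [hs0]
  have hQ0 : Q 0 = 1 := by
    have h := hrel 0
    rw [hR0, Finset.sum_eq_zero (fun i hi => by
      rw [hsz i 0 (by have := (Finset.mem_Icc.mp hi).1; omega), zero_smul]), add_zero] at h
    exact h.symm
  have hE0 : auxE βt γt Q 0 = 0 := by
    have h := hrel 1
    rw [hR1] at h
    have hsplit : ∑ i ∈ Finset.Icc 1 M, s i 1 • Q (1-i) = s 1 1 • Q 0 := by
      rw [show Finset.Icc 1 M = insert 1 (Finset.Icc 2 M) from by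
        ext x; simp only [Finset.mem_insert, Finset.mem_Icc]; omega]
      rw [Finset.sum_insert (by simp)]
      rw [Finset.sum_eq_zero (fun i hi => by
        rw [hsz i 1 (by have := (Finset.mem_Icc.mp hi).1; omega), zero_smul]), add_zero]
    rw [hsplit, hQ0, smul_eq_C_mul, mul_one] at h
    show Q (0+1) - (X - C (βt 0)) * Q 0 + C (auxG γt 0) * Q (0-1) = 0
    rw [show auxG γt 0 = 0 from by simp [auxG], map_zero, zero_mul, add_zero, hQ0, mul_one]
    have hb : βt 0 = βs 0 + s 1 1 := by rw [hβt 0, hsz 1 0 (by omega)]; norm_num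
    rw [hb, map_add, show Q (0+1) = Q 1 from rfl]
    linear_combination -h
  have hBv : ∀ j m, 1 ≤ m → m < j → auxB s βs βt γs γt j m = 0 := by
    intro j m h1 h2
    show s (j+1) m - s (j+1) (m+1) + s j m * (βt (m-j) - βs m)
      + s (j-1) m * auxG γt (m+1-j) - s (j-1) (m-1) * γs m = 0
    rw [hsz (j+1) m (by omega), hsz (j+1) (m+1) (by omega), hsz j m (by omega),
      hsz (j-1) (m-1) (by omega)]
    have : s (j-1) m * auxG γt (m+1-j) = 0 := by
      by_cases hj : j ≤ m+1
      · rw [show m+1-j = 0 from by omega, show auxG γt 0 = 0 from by simp [auxG], mul_zero]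
      · rw [hsz (j-1) m (by omega), zero_mul]
    rw [this]
    ring
  have hBBeq : ∀ j m, 1 ≤ j → j ≤ m → B j m = auxB s βs βt γs γt j m := by
    intro j m h1 h2
    rw [hB]
    show _ = s (j+1) m - s (j+1) (m+1) + s j m * (βt (m-j) - βs m)
      + s (j-1) m * auxG γt (m+1-j) - s (j-1) (m-1) * γs m
    rw [show auxG γt (m+1-j) = γt (m+1-j) from by
      rw [auxG]; simp only [if_neg (by omega : ¬ m+1-j = 0)]]
  have key := auxKEY M βs γs βt γt s R Q hRrec hs0 hsz hsM hβt hγt hrel'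
  constructor
  · rintro ⟨⟨h1, hrec⟩, -⟩
    have hEz : ∀ m, auxE βt γt Q m = 0 := by
      intro m
      cases m with
      | zero => exact hE0
      | succ k =>
        show Q (k+1+1) - (X - C (βt (k+1))) * Q (k+1) + C (auxG γt (k+1)) * Q (k+1-1) = 0
        rw [show auxG γt (k+1) = γt (k+1) from by
          rw [auxG]; simp only [if_neg (by omega : ¬ k+1 = 0)]]
        rw [hrec (k+1) (by omega)]
        ring
    have hsum0 : ∀ n, 1 ≤ n → ∑ j ∈ Finset.Icc 2 (M+1), auxB s βs βt γs γt j n • Q (n-j) = 0 := by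
      intro n hn
      rw [← key n hn]
      exact Finset.sum_eq_zero (fun i _ => by rw [hEz, smul_zero])
    have hBz : ∀ j n, 2 ≤ j → j ≤ M+1 → j ≤ n → auxB s βs βt γs γt j n = 0 := by
      intro j n h2 hM1 hjn
      have hn1 : 1 ≤ n := by omega
      have h := hsum0 n hn1
      rw [← Finset.sum_filter_add_sum_filter_not (Finset.Icc 2 (M+1)) (· ≤ n)] at h
      rw [Finset.sum_eq_zero (s := Finset.filter (fun x => ¬ x ≤ n) (Finset.Icc 2 (M+1)))
        (fun x hx => by
          simp only [Finset.mem_filter, Finset.mem_Icc, not_le] at hx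
          rw [hBv x n (by omega) (by omega), zero_smul]), add_zero] at h
      have himg : ∑ k ∈ ((Finset.Icc 2 (M+1)).filter (· ≤ n)).image (n - ·),
          auxB s βs βt γs γt (n-k) n • Q k = 0 := by
        rw [Finset.sum_image (by
          intro x hx y hy hxy
          simp only [Finset.coe_filter, Finset.mem_Icc, Set.mem_setOf_eq] at hx hy
          have hxy' : n - x = n - y := hxy
          omega)]
        rw [← h]
        refine Finset.sum_congr rfl fun x hx => ?_
        simp only [Finset.mem_filter, Finset.mem_Icc] at hx
        rw [show n - (n - x) = x from by omega]
      have hmem : n - j ∈ ((Finset.Icc 2 (M+1)).filter (· ≤ n)).image (n - ·) :=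
        Finset.mem_image_of_mem _ (by
          simp only [Finset.mem_filter, Finset.mem_Icc]; exact ⟨⟨h2, hM1⟩, hjn⟩)
      have := auxLI Q hQmonic hQdeg _ _ himg (n - j) hmem
      rwa [show n - (n - j) = j from by omega] at this
    refine ⟨fun i n h2 hiM hin => ?_, fun h2 n hMn => ?_, fun n hMn => ?_⟩
    · rw [hBBeq i n (by omega) hin]; exact hBz i n h2 (by omega) hin
    · rw [hBBeq M n (by omega) hMn]; exact hBz M n h2 (by omega) hMn
    · rw [hBBeq (M+1) n (by omega) hMn]; exact hBz (M+1) n (by omega) (by omega) hMn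
  · rintro ⟨hb1, hb2, hb3⟩
    have hγtne : ∀ m, 1 ≤ m → γt m ≠ 0 := by
      intro m hm
      have h := hb3 (m+M) (by omega)
      rw [hB] at h
      simp only [Nat.add_sub_cancel] at h
      rw [hsM (M+1+1) _ (by omega), hsM (M+1+1) _ (by omega), hsM (M+1) _ (by omega),
        show m+M+1-(M+1) = m from by omega] at h
      intro hz
      rw [hz, mul_zero] at h
      have hprod : s M (m+M-1) * γs (m+M) = 0 := by linear_combination -h
      rcases mul_eq_zero.mp hprod with h' | h'
      · exact hsMne (m+M-1) (by omega) h'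
      · exact hγs (m+M) (by omega) h'
    have hBBz : ∀ n, 1 ≤ n → ∀ j ∈ Finset.Icc 2 (M+1), auxB s βs βt γs γt j n • Q (n-j) = 0 := by
      intro n hn j hj
      rcases Finset.mem_Icc.mp hj with ⟨hj2, hjM⟩
      by_cases hjn : j ≤ n
      · rw [← hBBeq j n (by omega) hjn]
        rcases (by omega : j ≤ M-1 ∨ j = M ∨ j = M+1) with h | h | h
        · rw [hb1 j n hj2 h hjn, zero_smul]
        · subst h; rw [hb2 (by omega) n hjn, zero_smul]
        · subst h; rw [hb3 n hjn, zero_smul]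
      · rw [hBv j n hn (by omega), zero_smul]
    have hEz : ∀ m, auxE βt γt Q m = 0 := by
      intro m
      induction m using Nat.strong_induction_on with
      | _ m ih =>
        cases m with
        | zero => exact hE0
        | succ k =>
          have h := key (k+1) (by omega)
          rw [Finset.sum_eq_zero (hBBz (k+1) (by omega))] at h
          rw [Finset.sum_range_succ'] at h
          rw [Finset.sum_eq_zero (fun i _ => by
            show s (i+1) (k+1) • auxE βt γt Q (k+1-(i+1)) = 0
            rw [ih (k+1-(i+1)) (by omega), smul_zero]), zero_add] at h
          rw [hs0, Nat.sub_zero, one_smul] at h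
          exact h
    refine ⟨⟨?_, ?_⟩, hγtne⟩
    · have h := hE0
      rw [show auxE βt γt Q 0 = Q 1 - (X - C (βt 0)) * Q 0 + C (auxG γt 0) * Q 0 from rfl,
        show auxG γt 0 = 0 from by simp [auxG], map_zero, zero_mul, add_zero, sub_eq_zero] at h
      exact h
    · intro n hn
      have h := hEz n
      rw [show auxE βt γt Q n = Q (n+1) - (X - C (βt n)) * Q n + C (auxG γt n) * Q (n-1) from
        rfl, show auxG γt n = γt n from by
          rw [auxG]; simp only [if_neg (by omega : ¬ n = 0)]] at h
      linear_combination h
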